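/- The function g(w) = (w²/3 − 1)^{−1/2} satisfies the ordinary differential equation g''(w)·w + 2·g'(w) − g(w)⁵·w = 0 for all w > √3. -/

import Mathlib

/-- `g(w) = (w²/3 − 1)^{−1/2}` solves `g''·w + 2g' − g⁵·w = 0` for `w > √3`. -/
theorem radial_explicit_solution :
    let g : ℝ → ℝ := fun w => (w ^ 2 / 3 - 1) ^ (-(1 / 2 : ℝ))
    ∀ w : ℝ, Real.sqrt 3 < w →
      deriv (deriv g) w * w + 2 * deriv g w - g w ^ 5 * w = 0 := by
  intro g w hw
  have hupos : ∀ x : ℝ, Real.sqrt 3 < x → 0 < x ^ 2 / 3 - 1 := by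
    intro x hx
    have h0 : (0:ℝ) ≤ Real.sqrt 3 := Real.sqrt_nonneg 3
    have h3 : Real.sqrt 3 ^ 2 = 3 := Real.sq_sqrt (by norm_num)
    nlinarith
  set g1 : ℝ → ℝ := fun x =>
    -(1/2 : ℝ) * (x ^ 2 / 3 - 1) ^ (-(1/2 : ℝ) - 1) * (2 * x / 3) with hg1
  have hu : ∀ x : ℝ, HasDerivAt (fun y : ℝ => y ^ 2 / 3 - 1) (2 * x / 3) x := by
    intro x
    have := ((hasDerivAt_pow 2 x).div_const 3).sub_const 1
    exact this.congr_deriv (by norm_num)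
  have hderiv1 : ∀ x : ℝ, Real.sqrt 3 < x → HasDerivAt g (g1 x) x := by
    intro x hx
    have h := (hu x).rpow_const (p := -(1/2 : ℝ)) (Or.inl (ne_of_gt (hupos x hx)))
    convert h using 1
    simp only [g1]
    ring
  have hopen : IsOpen {x : ℝ | Real.sqrt 3 < x} := isOpen_lt continuous_const continuous_id
  have heq : deriv g =ᶠ[nhds w] g1 :=
    Filter.eventuallyEq_of_mem (hopen.mem_nhds hw) (fun x hx => (hderiv1 x hx).deriv)
  have hD : HasDerivAt g1
      ((-(1/2 : ℝ) * ((-(1/2 : ℝ) - 1) * (w ^ 2 / 3 - 1) ^ (-(1/2 : ℝ) - 1 - 1) * (2 * w / 3)))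
        * (2 * w / 3)
        + (-(1/2 : ℝ) * (w ^ 2 / 3 - 1) ^ (-(1/2 : ℝ) - 1)) * (2 / 3)) w := by
    have hf : HasDerivAt (fun x : ℝ => -(1/2 : ℝ) * (x ^ 2 / 3 - 1) ^ (-(1/2 : ℝ) - 1))
        (-(1/2 : ℝ) * ((-(1/2 : ℝ) - 1) * (w ^ 2 / 3 - 1) ^ (-(1/2 : ℝ) - 1 - 1) * (2 * w / 3))) w := by
      have h := (((hu w).rpow_const (p := -(1/2 : ℝ) - 1) (Or.inl (ne_of_gt (hupos w hw))))).const_mul (-(1/2 : ℝ))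
      exact h.congr_deriv (by ring)
    have hh : HasDerivAt (fun x : ℝ => 2 * x / 3) (2 / 3) w := by
      have := ((hasDerivAt_id w).const_mul (2:ℝ)).div_const 3
      exact this.congr_deriv (by ring)
    have := hf.mul hh
    exact this
  have hd2 : deriv (deriv g) w =
      (-(1/2 : ℝ) * ((-(1/2 : ℝ) - 1) * (w ^ 2 / 3 - 1) ^ (-(1/2 : ℝ) - 1 - 1) * (2 * w / 3)))
        * (2 * w / 3)
        + (-(1/2 : ℝ) * (w ^ 2 / 3 - 1) ^ (-(1/2 : ℝ) - 1)) * (2 / 3) := by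
    rw [heq.deriv_eq]
    exact hD.deriv
  have hd1 : deriv g w = g1 w := (hderiv1 w hw).deriv
  set u : ℝ := w ^ 2 / 3 - 1 with hu'
  have hup : 0 < u := hupos w hw
  have h5 : (u ^ (-(1/2 : ℝ))) ^ 5 = u ^ (-(5/2 : ℝ)) := by
    rw [← Real.rpow_natCast (u ^ (-(1/2 : ℝ))) 5, ← Real.rpow_mul hup.le]
    norm_num
  have e1 : u ^ (-(1/2 : ℝ) - 1) = u ^ (-(5/2 : ℝ)) * u := by
    rw [show (-(1/2 : ℝ) - 1) = (-(5/2 : ℝ)) + 1 by norm_num, Real.rpow_add hup, Real.rpow_one]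
  have e2 : u ^ (-(1/2 : ℝ) - 1 - 1) = u ^ (-(5/2 : ℝ)) := by norm_num
  have hg : g w = u ^ (-(1/2 : ℝ)) := rfl
  rw [hd2, hd1, hg, h5, hg1]
  beta_reduce
  simp only [← hu', e1, e2]
  have : u = w ^ 2 / 3 - 1 := hu'
  rw [this]
  ring
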